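/- Let r and s both be even positive integers. The generalized Kolakoski sequence over {r,s} can be written, after grouping into two-letter blocks A = rr and B = ss, as the fixed point of the substitution A ↦ A^m B^m, B ↦ A^n B^n where m = r/2 and n = s/2; consequently the frequencies of the letters r and s both exist and equal 1/2. -/

import Mathlib

namespace Kola

/-- Run-length encoding of a finite word as (letter, count) pairs. -/
def rle : List ℕ → List (ℕ × ℕ)
  | [] => []
  | a :: l =>
    match rle l with
    | [] => [(a, 1)]
    | (b, n) :: t => if a = b then (b, n + 1) :: t else (a, 1) :: (b, n) :: t

/-- Boundary adjustment for the first run: discard if length ≤ r, extend to s if length in (r,s]. -/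
def fixRun (r s : ℕ) : List (ℕ × ℕ) → List (ℕ × ℕ)
  | [] => []
  | (a, n) :: t => if n ≤ r then t else if n ≤ s then (a, s) :: t else (a, n) :: t

/-- The Kolakoski derivative over the alphabet {r,s}. -/
def D (r s : ℕ) (w : List ℕ) : List ℕ :=
  match rle w with
  | [] => []
  | [(_, n)] => if n < s then [] else [n]
  | ps => ((fixRun r s ((fixRun r s ps).reverse)).reverse).map Prod.snd

/-- A C∞-word over {r,s}: all iterated derivatives are words over {r,s}. -/
def IsCInf (r s : ℕ) (w : List ℕ) : Prop :=
  ∀ k : ℕ, ∀ a ∈ (D r s)^[k] w, a = r ∨ a = s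

/-- `t` enumerates the starting indices of the (maximal) runs of the sequence `z`. -/
def IsRunPartition (z : ℕ → ℕ) (t : ℕ → ℕ) : Prop :=
  t 0 = 0 ∧ StrictMono t ∧
  (∀ k i, t k ≤ i → i < t (k + 1) → z i = z (t k)) ∧
  (∀ k, z (t (k + 1)) ≠ z (t k))

/-- `w` is the run-length sequence of `z`. -/
def IsRunLengthSeq (z w : ℕ → ℕ) : Prop :=
  ∃ t, IsRunPartition z t ∧ ∀ k, w k = t (k + 1) - t k

/-- A Kolakoski sequence over {r,s}: a sequence over {r,s} equal to its own run-length sequence. -/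
def IsKolakoski (r s : ℕ) (z : ℕ → ℕ) : Prop :=
  (∀ n, z n = r ∨ z n = s) ∧ IsRunLengthSeq z z

def EventuallyPeriodic (z : ℕ → ℕ) : Prop :=
  ∃ m q : ℕ, 1 ≤ q ∧ ∀ i, m ≤ i → z (i + q) = z i

/-- `w` occurs as a factor of the infinite sequence `z`. -/
def FactorOf (w : List ℕ) (z : ℕ → ℕ) : Prop :=
  ∃ i, w = (List.range w.length).map fun k => z (i + k)

/-- Letter-exchange on words over {r,s}. -/
def exch (r s : ℕ) (w : List ℕ) : List ℕ := w.map fun a => if a = r then s else r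

/-- Number of occurrences of `w` as a factor of the prefix of length `n` of `z`. -/
def countOcc (z : ℕ → ℕ) (w : List ℕ) (n : ℕ) : ℕ :=
  ((Finset.range n).filter fun i => i + w.length ≤ n ∧ ∀ k < w.length, z (i + k) = w.getD k 0).card

/-- All words of length n over {r,s}. -/
def allWords (r s : ℕ) : ℕ → Finset (List ℕ)
  | 0 => {[]}
  | n + 1 => (allWords r s n).image (List.cons r) ∪ (allWords r s n).image (List.cons s)


/-- The block sequence `b` (over the letters r = "A", s = "B") is a fixed point of the
substitution A ↦ A^m B^m, B ↦ A^n B^n with m = r/2, n = s/2: there is a partition of ℕ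
into consecutive blocks, the k-th of length `b k`, whose contents spell σ(b k). -/
def SubstFixedPoint (r s : ℕ) (b : ℕ → ℕ) : Prop :=
  ∃ t : ℕ → ℕ, t 0 = 0 ∧ (∀ k, t (k + 1) = t k + b k) ∧
    ∀ k j, j < b k → b (t k + j) = if 2 * j < b k then r else s

/-- For even r, s the Kolakoski sequence over {r,s} consists of two-letter
blocks rr, ss; the block sequence is the fixed point of A ↦ A^{r/2} B^{r/2},
B ↦ A^{s/2} B^{s/2}; consequently both letter frequencies exist and equal 1/2. -/
theorem kolakoski_even_even (r s : ℕ) (hr : 0 < r) (hrs : r < s)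
    (her : Even r) (hes : Even s)
    (z : ℕ → ℕ) (hz : IsKolakoski r s z) (h0 : z 0 = r) :
    (∀ k, z (2 * k + 1) = z (2 * k)) ∧
    SubstFixedPoint r s (fun k => z (2 * k)) ∧
    Filter.Tendsto
      (fun n => (((Finset.range n).filter fun i => z i = r).card : ℝ) / n)
      Filter.atTop (nhds (1 / 2)) ∧
    Filter.Tendsto
      (fun n => (((Finset.range n).filter fun i => z i = s).card : ℝ) / n)
      Filter.atTop (nhds (1 / 2)) := by
  obtain ⟨hz1, t, ⟨ht0, htmono, hconst, hdiff⟩, hlen⟩ := hz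
  have hsne : s ≠ r := (Nat.ne_of_lt hrs).symm
  have hzpos : ∀ k, 0 < z k := by
    intro k; rcases hz1 k with h | h <;> omega
  have hzle : ∀ k, z k ≤ s := by
    intro k; rcases hz1 k with h | h <;> omega
  have hstep : ∀ k, t (k + 1) = t k + z k := by
    intro k
    have h1 : t k < t (k + 1) := htmono (Nat.lt_succ_self k)
    have := hlen k; omega
  have hteven : ∀ k, Even (t k) := by
    intro k
    induction k with
    | zero => simp [ht0]
    | succ n ih =>
      rw [hstep]
      refine ih.add ?_
      rcases hz1 n with h | h <;> rw [h] <;> assumption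
  have hval : ∀ k, z (t k) = if k % 2 = 0 then r else s := by
    intro k
    induction k with
    | zero => simpa [ht0]
    | succ n ih =>
      have hne := hdiff n
      rw [ih] at hne
      by_cases hn : n % 2 = 0
      · have hn1 : (n + 1) % 2 = 1 := by omega
        rw [if_pos hn] at hne
        rw [hn1]
        norm_num
        rcases hz1 (t (n + 1)) with h | h
        · exact absurd h hne
        · exact h
      · have hn1 : (n + 1) % 2 = 0 := by omega
        rw [if_neg hn] at hne
        rw [hn1]
        norm_num
        rcases hz1 (t (n + 1)) with h | h
        · exact h
        · exact absurd h hne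
  -- every index lies in some run
  have hmem : ∀ i, ∃ k, t k ≤ i ∧ i < t (k + 1) := by
    intro i
    have hub : ∃ j, i < t j := ⟨i + 1, Nat.lt_of_lt_of_le (Nat.lt_succ_self i)
      (htmono.le_apply)⟩
    classical
    set K := Nat.find hub with hK
    have hKspec : i < t K := Nat.find_spec hub
    have hKpos : 0 < K := by
      rcases Nat.eq_zero_or_pos K with h | h
      · exfalso; rw [h, ht0] at hKspec; omega
      · exact h
    refine ⟨K - 1, ?_, ?_⟩
    · have := Nat.find_min hub (show K - 1 < K by omega)
      omega
    · have : K - 1 + 1 = K := by omega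
      rw [this]; exact hKspec
  -- pairing: z(2k+1) = z(2k)
  have hpair : ∀ k, z (2 * k + 1) = z (2 * k) := by
    intro k
    obtain ⟨j, hj1, hj2⟩ := hmem (2 * k)
    have he1 := hteven j
    have he2 := hteven (j + 1)
    have h21 : 2 * k + 1 < t (j + 1) := by
      rcases he2 with ⟨c, hc⟩; omega
    rw [hconst j (2 * k) hj1 hj2, hconst j (2 * k + 1) (by omega) h21]
  -- run start values
  have hvr : ∀ k, z (t (2 * k)) = r := by
    intro k; rw [hval]; simp [Nat.mul_mod_right]
  have hvs : ∀ k, z (t (2 * k + 1)) = s := by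
    intro k; rw [hval]; simp [Nat.add_mod, Nat.mul_mod_right]
  have hstep2 : ∀ k, t (2 * (k + 1)) = t (2 * k) + 2 * z (2 * k) := by
    intro k
    have h1 := hstep (2 * k)
    have h2 := hstep (2 * k + 1)
    have h3 := hpair k
    have : 2 * (k + 1) = 2 * k + 1 + 1 := by ring
    rw [this]; omega
  refine ⟨hpair, ?_, ?_⟩
  · -- SubstFixedPoint
    refine ⟨fun k => t (2 * k) / 2, by simp [ht0], ?_, ?_⟩
    · intro k
      show t (2 * (k + 1)) / 2 = t (2 * k) / 2 + z (2 * k)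
      have h2 := hstep2 k
      rcases hteven (2 * k) with ⟨c, hc⟩
      omega
    · intro k j hj
      simp only at hj ⊢
      rcases hteven (2 * k) with ⟨c, hc⟩
      have hpos : 2 * (t (2 * k) / 2 + j) = t (2 * k) + 2 * j := by omega
      rw [hpos]
      have hs1 := hstep (2 * k)
      have hs2 := hstep (2 * k + 1)
      have hp := hpair k
      by_cases hcase : 2 * j < z (2 * k)
      · rw [if_pos hcase]
        rw [hconst (2 * k) _ (by omega) (by omega)]
        exact hvr k
      · rw [if_neg hcase]
        rw [hconst (2 * k + 1) _ (by omega) (by omega)]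
        exact hvs k
  -- frequencies
  set f : ℕ → ℕ := fun n => ((Finset.range n).filter fun i => z i = r).card with hf
  have hsplit : ∀ m n, m ≤ n →
      f n = f m + ((Finset.Ico m n).filter fun i => z i = r).card := by
    intro m n hmn
    classical
    have : Finset.range n = Finset.range m ∪ Finset.Ico m n := by
      rw [Finset.range_eq_Ico, Finset.range_eq_Ico, Finset.Ico_union_Ico_eq_Ico (Nat.zero_le m) hmn]
    rw [hf]
    simp only [this, Finset.filter_union]
    rw [Finset.card_union_of_disjoint]
    exact Finset.disjoint_filter_filter
      (by rw [Finset.range_eq_Ico]; exact Finset.Ico_disjoint_Ico_consecutive 0 m n)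
  have hcount : ∀ k, 2 * f (t (2 * k)) = t (2 * k) := by
    intro k
    induction k with
    | zero => simp [ht0, hf]
    | succ n ih =>
      have hs1 := hstep (2 * n)
      have hs2 := hstep (2 * n + 1)
      have hp := hpair n
      have h1 : f (t (2 * n + 1)) = f (t (2 * n)) + z (2 * n) := by
        rw [hsplit (t (2 * n)) (t (2 * n + 1)) (by omega)]
        congr 1
        rw [Finset.filter_true_of_mem, Nat.card_Ico]
        · omega
        · intro i hi
          rw [Finset.mem_Ico] at hi
          rw [hconst (2 * n) i hi.1 hi.2]; exact hvr n
      have h2 : f (t (2 * n + 1 + 1)) = f (t (2 * n + 1)) := by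
        have hempty : ((Finset.Ico (t (2 * n + 1)) (t (2 * n + 1 + 1))).filter
            fun i => z i = r) = ∅ :=
          Finset.filter_false_of_mem (fun i hi => by
            rw [Finset.mem_Ico] at hi
            rw [hconst (2 * n + 1) i hi.1 hi.2, hvs n]
            omega)
        rw [hsplit (t (2 * n + 1)) (t (2 * n + 1 + 1))
          (le_of_lt (htmono (Nat.lt_succ_self _))), hempty, Finset.card_empty,
          Nat.add_zero]
      have he : 2 * (n + 1) = 2 * n + 1 + 1 := by ring
      rw [he, h2, h1]
      omega
  have hmono : ∀ m n, m ≤ n → f m ≤ f n := by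
    intro m n h; rw [hsplit m n h]; omega
  have hlip : ∀ m n, m ≤ n → f n ≤ f m + (n - m) := by
    intro m n h
    rw [hsplit m n h]
    have := Finset.card_filter_le (Finset.Ico m n) (fun i => z i = r)
    rw [Nat.card_Ico] at this
    omega
  -- two-sided bound
  have hbound : ∀ n, n ≤ 2 * f n + 2 * s ∧ 2 * f n ≤ n + 2 * s := by
    intro n
    obtain ⟨j, hj1, hj2⟩ := hmem n
    set k := j / 2 with hk
    have hkle : t (2 * k) ≤ n := by
      rcases Nat.even_or_odd j with ⟨c, hc⟩ | ⟨c, hc⟩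
      · have : 2 * k = j := by omega
        rw [this]; exact hj1
      · have : 2 * k = j - 1 := by omega
        rw [this]
        calc t (j - 1) ≤ t j := htmono.monotone (by omega)
          _ ≤ n := hj1
    have hnlt : n < t (2 * k) + 2 * s := by
      rcases Nat.even_or_odd j with ⟨c, hc⟩ | ⟨c, hc⟩
      · have hjk : j = 2 * k := by omega
        rw [hjk] at hj2
        have := hstep (2 * k)
        have := hzle (2 * k)
        omega
      · have hjk : j = 2 * k + 1 := by omega
        have h1 := hstep (2 * k)
        have h2 := hstep (2 * k + 1)
        have := hzle (2 * k)
        have := hzle (2 * k + 1)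
        rw [hjk] at hj2
        omega
    have hc := hcount k
    have h1 := hmono (t (2 * k)) n hkle
    have h2 := hlip (t (2 * k)) n hkle
    omega
  -- real squeeze
  have hrt : Filter.Tendsto (fun n : ℕ => ((f n : ℝ)) / n)
      Filter.atTop (nhds (1 / 2)) := by
    rw [tendsto_iff_dist_tendsto_zero]
    apply squeeze_zero' (g := fun n : ℕ => (s : ℝ) / n)
    · exact Filter.Eventually.of_forall fun n => dist_nonneg
    · filter_upwards [Filter.eventually_ge_atTop 1] with n hn
      have hnpos : (0 : ℝ) < n := by exact_mod_cast hn
      rw [Real.dist_eq]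
      rw [abs_le]
      obtain ⟨hb1, hb2⟩ := hbound n
      have hb1' : (n : ℝ) ≤ 2 * f n + 2 * s := by exact_mod_cast hb1
      have hb2' : 2 * (f n : ℝ) ≤ n + 2 * s := by exact_mod_cast hb2
      have key : (f n : ℝ) / n - 1 / 2 = (2 * f n - n) / (2 * n) := by
        field_simp
      constructor
      · rw [key, neg_le, ← neg_div, div_le_div_iff₀ (by positivity) hnpos]
        nlinarith
      · rw [key, div_le_div_iff₀ (by positivity) hnpos]
        nlinarith
    · exact tendsto_const_div_atTop_nhds_zero_nat (s : ℝ)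
  refine ⟨hrt, ?_⟩
  -- s-frequency: complement
  have hcompl : ∀ n, (((Finset.range n).filter fun i => z i = s).card : ℝ)
      = n - f n := by
    intro n
    classical
    have h1 : ((Finset.range n).filter fun i => z i = s)
        = (Finset.range n).filter fun i => ¬ (z i = r) := by
      apply Finset.filter_congr
      intro i _
      rcases hz1 i with h | h <;> simp [h, hsne] <;> omega
    have h2 : f n + ((Finset.range n).filter fun i => ¬ (z i = r)).card = n := by
      have h := Finset.card_filter_add_card_filter_not
        (s := Finset.range n) (p := fun i => z i = r)
      rw [Finset.card_range] at h
      simpa [hf] using h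
    rw [h1]
    have hle : f n ≤ n := by
      have := Finset.card_filter_le (Finset.range n) (fun i => z i = r)
      rwa [Finset.card_range] at this
    have h3 : ((Finset.range n).filter fun i => ¬ (z i = r)).card = n - f n := by
      rw [hf] at *; omega
    rw [h3, Nat.cast_sub hle]
  have heq : ∀ᶠ n : ℕ in Filter.atTop,
      (((Finset.range n).filter fun i => z i = s).card : ℝ) / n
        = 1 - (f n : ℝ) / n := by
    filter_upwards [Filter.eventually_ge_atTop 1] with n hn
    have hnpos : (0 : ℝ) < n := by exact_mod_cast hn
    rw [hcompl n, sub_div, div_self (ne_of_gt hnpos)]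
  rw [Filter.tendsto_congr' heq]
  have : (1 : ℝ) / 2 = 1 - 1 / 2 := by norm_num
  rw [this]
  exact Filter.Tendsto.sub tendsto_const_nhds hrt

end Kola
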